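/- Every homogeneous polynomial in ℤ[x₁,…,xₙ] of degree strictly greater than n(n−1)/2 lies in the ideal S generated by the symmetric polynomials of strictly positive degree. -/

import Mathlib

open MvPolynomial

namespace CoinvAux

noncomputable def H (n : ℕ) : List (Fin n) → ℕ → MvPolynomial (Fin n) ℤ
  | _, 0 => 1
  | [], _ + 1 => 0
  | x :: xs, k + 1 => X x * H n (x :: xs) k + H n xs (k + 1)
  termination_by L k => (k, L.length)

@[simp] lemma H_zero (n : ℕ) (L : List (Fin n)) : H n L 0 = 1 := by
  cases L <;> rw [H.eq_def]

@[simp] lemma H_nil (n k : ℕ) : H n [] (k + 1) = 0 := by rw [H.eq_def]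

lemma H_cons (n k : ℕ) (x : Fin n) (xs : List (Fin n)) :
    H n (x :: xs) (k + 1) = X x * H n (x :: xs) k + H n xs (k + 1) := by
  rw [H.eq_def]

lemma H_hom (n : ℕ) (k : ℕ) : ∀ L : List (Fin n), (H n L k).IsHomogeneous k := by
  induction k using Nat.strong_induction_on with
  | _ k ih =>
    match k with
    | 0 => intro L; simpa using isHomogeneous_one _ _
    | k + 1 =>
      intro L
      induction L with
      | nil => simpa using isHomogeneous_zero _ _ _
      | cons x xs ihL =>
        rw [H_cons]
        have h1 := (isHomogeneous_X ℤ x).mul (ih k (Nat.lt_succ_self k) (x :: xs))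
        rw [Nat.add_comm 1 k] at h1
        exact h1.add (by simpa using ihL)

lemma H_vars (n : ℕ) (k : ℕ) : ∀ L : List (Fin n), (H n L k).vars ⊆ L.toFinset := by
  classical
  induction k using Nat.strong_induction_on with
  | _ k ih =>
    match k with
    | 0 => intro L; simp
    | k + 1 =>
      intro L
      induction L with
      | nil => simp
      | cons x xs ihL =>
        rw [H_cons]
        refine (vars_add_subset _ _).trans ?_
        apply Finset.union_subset
        · refine (vars_mul _ _).trans (Finset.union_subset ?_ ?_)
          · simp [vars_X]
          · exact (ih k (Nat.lt_succ_self k) (x :: xs))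
        · exact ihL.trans (by intro i hi; simp at hi ⊢; exact Or.inr hi)

lemma H_cc (n : ℕ) (k : ℕ) (L : List (Fin n)) : constantCoeff (H n L (k + 1)) = 0 := by
  induction L with
  | nil => simp
  | cons x xs ihL => rw [H_cons]; simp [ihL]

lemma H_rename (n : ℕ) (f : Fin n → Fin n) (k : ℕ) :
    ∀ L : List (Fin n), rename f (H n L k) = H n (L.map f) k := by
  induction k using Nat.strong_induction_on with
  | _ k ih =>
    match k with
    | 0 => intro L; simp
    | k + 1 =>
      intro L
      induction L with
      | nil => simp
      | cons x xs ihL =>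
        rw [H_cons, List.map_cons, H_cons]
        rw [map_add, map_mul, rename_X, ih k (Nat.lt_succ_self k) (x :: xs), ihL,
          List.map_cons]

lemma H_swap (n : ℕ) (a b : Fin n) (l : List (Fin n)) :
    ∀ k, H n (a :: b :: l) k = H n (b :: a :: l) k := by
  intro k
  induction k using Nat.strong_induction_on with
  | _ k ih =>
    match k with
    | 0 => simp
    | 1 =>
      rw [H_cons n 0 a (b :: l), H_cons n 0 b l, H_cons n 0 b (a :: l), H_cons n 0 a l]
      simp only [H_zero]
      ring
    | (k + 2) =>
      have ih1 := ih (k + 1) (by omega)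
      have ih0 := ih k (by omega)
      calc H n (a :: b :: l) (k + 2)
          = X a * H n (a :: b :: l) (k + 1) + H n (b :: l) (k + 2) :=
            H_cons n (k + 1) a (b :: l)
        _ = X a * (X b * H n (b :: a :: l) k + H n (a :: l) (k + 1))
              + (X b * H n (b :: l) (k + 1) + H n l (k + 2)) := by
            rw [ih1, H_cons n k b (a :: l), H_cons n (k + 1) b l]
        _ = X b * (X a * H n (a :: b :: l) k + H n (b :: l) (k + 1))
              + (X a * H n (a :: l) (k + 1) + H n l (k + 2)) := by
            rw [ih0]; ring
        _ = X b * H n (a :: b :: l) (k + 1) + (X a * H n (a :: l) (k + 1) + H n l (k + 2)) := by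
            rw [H_cons n k a (b :: l)]
        _ = X b * H n (b :: a :: l) (k + 1) + H n (a :: l) (k + 2) := by
            rw [ih1, H_cons n (k + 1) a l]
        _ = H n (b :: a :: l) (k + 2) := (H_cons n (k + 1) b (a :: l)).symm

lemma H_perm (n : ℕ) {L₁ L₂ : List (Fin n)} (h : L₁.Perm L₂) :
    ∀ k, H n L₁ k = H n L₂ k := by
  induction h with
  | nil => intro k; rfl
  | cons x h ihp =>
    intro k
    induction k using Nat.strong_induction_on with
    | _ k ih =>
      match k with
      | 0 => simp
      | k + 1 => rw [H_cons, H_cons, ih k (Nat.lt_succ_self k), ihp]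
  | swap a b l => exact H_swap n b a l
  | trans h₁ h₂ ih₁ ih₂ => intro k; rw [ih₁, ih₂]


/-- The ideal generated by the complete homogeneous polynomials in the variables of `L`
of degree larger than the number of missing variables. -/
noncomputable def I (n : ℕ) (L : List (Fin n)) : Ideal (MvPolynomial (Fin n) ℤ) :=
  Ideal.span {q | ∃ k, n - L.length < k ∧ H n L k = q}

lemma H_mem_I (n : ℕ) (L : List (Fin n)) (k : ℕ) (hk : n - L.length < k) :
    H n L k ∈ I n L :=
  Ideal.subset_span ⟨k, hk, rfl⟩

lemma I_mono (n : ℕ) (x : Fin n) (xs : List (Fin n)) (hnd : (x :: xs).Nodup) :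
    I n xs ≤ I n (x :: xs) := by
  have hlen : xs.length + 1 ≤ n := by
    simpa using hnd.length_le_card
  rw [I, Ideal.span_le]
  rintro q ⟨k, hk, rfl⟩
  obtain ⟨m, rfl⟩ : ∃ m, k = m + 1 := ⟨k - 1, by omega⟩
  have hsplit : H n xs (m + 1) = H n (x :: xs) (m + 1) - X x * H n (x :: xs) m := by
    rw [H_cons]; ring
  rw [hsplit]
  have h1 : n - (x :: xs).length < m + 1 := by simp at hk ⊢; omega
  have h2 : n - (x :: xs).length < m := by simp at hk ⊢; omega
  exact sub_mem (H_mem_I n _ _ h1) (Ideal.mul_mem_left _ _ (H_mem_I n _ _ h2))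

lemma X_pow_sub (n : ℕ) (x : Fin n) (xs : List (Fin n)) (a : ℕ) :
    (X x : MvPolynomial (Fin n) ℤ) ^ a
      = H n (x :: xs) a - ∑ t ∈ Finset.range a, X x ^ t * H n xs (a - t) := by
  induction a with
  | zero => simp
  | succ a ih =>
    have e : ∀ t ∈ Finset.range a, X x ^ (t + 1) * H n xs (a + 1 - (t + 1))
        = X x * (X x ^ t * H n xs (a - t)) := by
      intro t _
      have h : a + 1 - (t + 1) = a - t := by omega
      rw [h, pow_succ]; ring
    rw [H_cons n a x xs, Finset.sum_range_succ', Finset.sum_congr rfl e, ← Finset.mul_sum]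
    simp only [pow_zero, one_mul, Nat.sub_zero]
    rw [pow_succ, mul_comm ((X x : MvPolynomial (Fin n) ℤ) ^ a) (X x), ih]
    ring

lemma degree_add (n : ℕ) (d e : Fin n →₀ ℕ) : (d + e).degree = d.degree + e.degree := by
  simp [Finsupp.degree_eq_weight_one, map_add]

lemma degree_single (n : ℕ) (x : Fin n) (t : ℕ) : (Finsupp.single x t).degree = t := by
  rcases eq_or_ne t 0 with rfl | ht
  · simp
  · rw [Finsupp.degree_apply, Finsupp.support_single_ne_zero _ ht, Finset.sum_singleton,
      Finsupp.single_eq_same]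

/-- Degree threshold. -/
def T (n : ℕ) : List (Fin n) → ℕ
  | [] => 1
  | _ :: xs => T n xs + (n - (xs.length + 1))

lemma key (n : ℕ) : ∀ L : List (Fin n), L.Nodup →
    ∀ (d : Fin n →₀ ℕ) (r : ℤ), (∀ i ∈ d.support, i ∈ L) →
      T n L ≤ d.degree → (monomial d r : MvPolynomial (Fin n) ℤ) ∈ I n L := by
  intro L
  induction L with
  | nil =>
    intro _ d r hsupp hdeg
    exfalso
    have hd0 : d = 0 := by
      ext i
      by_contra h
      exact (List.not_mem_nil (a := i)) (hsupp i (Finsupp.mem_support_iff.mpr h))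
    rw [hd0] at hdeg
    simp [T] at hdeg
  | cons x xs ihL =>
    intro hnd
    have hndxs : xs.Nodup := hnd.of_cons
    have hx : x ∉ xs := (List.nodup_cons.mp hnd).1
    suffices h : ∀ a (d : Fin n →₀ ℕ) (r : ℤ), d x = a → (∀ i ∈ d.support, i ∈ x :: xs) →
        T n (x :: xs) ≤ d.degree → (monomial d r : MvPolynomial (Fin n) ℤ) ∈ I n (x :: xs) by
      intro d r hs hd
      exact h (d x) d r rfl hs hd
    intro a
    induction a using Nat.strong_induction_on with
    | _ a iha =>
      intro d r hdx hsupp hdeg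
      rcases eq_or_ne r 0 with rfl | hr
      · simp only [map_zero]; exact zero_mem _
      have hsplit : d = Finsupp.single x a + d.erase x := by
        rw [← hdx]; exact (Finsupp.single_add_erase x d).symm
      have hdeg_split : d.degree = a + (d.erase x).degree := by
        conv_lhs => rw [hsplit]
        rw [degree_add, degree_single]
      have hmono : (monomial d r : MvPolynomial (Fin n) ℤ)
          = X x ^ a * monomial (d.erase x) r := by
        rw [X_pow_eq_monomial, monomial_mul, one_mul, ← hsplit]
      have hesupp : ∀ i ∈ (d.erase x).support, i ∈ xs := by
        intro i hi
        rw [Finsupp.support_erase] at hi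
        have hix : i ≠ x := Finset.ne_of_mem_erase hi
        have h2 := hsupp i (Finset.mem_of_mem_erase hi)
        rcases List.mem_cons.mp h2 with h3 | h3
        · exact absurd h3 hix
        · exact h3
      have hT : T n (x :: xs) = T n xs + (n - (xs.length + 1)) := rfl
      by_cases hac : a ≤ n - (xs.length + 1)
      · have hdeg2 : T n xs ≤ (d.erase x).degree := by omega
        have hm := ihL hndxs (d.erase x) r hesupp hdeg2
        rw [hmono]
        exact Ideal.mul_mem_left _ _ (I_mono n x xs hnd hm)
      · push_neg at hac
        rw [hmono, X_pow_sub n x xs a, sub_mul]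
        have hgen : H n (x :: xs) a ∈ I n (x :: xs) := by
          apply H_mem_I
          simpa using hac
        refine Ideal.sub_mem _ (Ideal.mul_mem_right _ _ hgen) ?_
        rw [Finset.sum_mul]
        refine Ideal.sum_mem _ ?_
        intro t ht
        rw [Finset.mem_range] at ht
        set q : MvPolynomial (Fin n) ℤ := H n xs (a - t) * monomial (d.erase x) r with hqdef
        have hq : q.IsHomogeneous ((a - t) + (d.erase x).degree) :=
          (H_hom n (a - t) xs).mul (isHomogeneous_monomial r rfl)
        have hqvars : q.vars ⊆ xs.toFinset := by
          refine (vars_mul _ _).trans (Finset.union_subset (H_vars n _ xs) ?_)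
          rw [vars_monomial hr]
          intro i hi
          exact List.mem_toFinset.mpr (hesupp i hi)
        have hrw : X x ^ t * H n xs (a - t) * monomial (d.erase x) r
            = ∑ e ∈ q.support, monomial (Finsupp.single x t + e) (q.coeff e) := by
          conv_lhs => rw [mul_assoc, ← hqdef, ← support_sum_monomial_coeff q]
          rw [Finset.mul_sum]
          refine Finset.sum_congr rfl fun e _ => ?_
          rw [X_pow_eq_monomial, monomial_mul, one_mul]
        rw [hrw]
        refine Ideal.sum_mem _ fun e he => ?_
        have hex : e x = 0 := by
          by_contra hcon
          have hxv : x ∈ q.vars := (mem_vars x).mpr ⟨e, he, Finsupp.mem_support_iff.mpr hcon⟩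
          exact hx (List.mem_toFinset.mp (hqvars hxv))
        have hdege : e.degree = (a - t) + (d.erase x).degree := by
          simpa [Finsupp.degree_eq_weight_one, Pi.one_def] using hq (mem_support_iff.mp he)
        refine iha t ht (Finsupp.single x t + e) (q.coeff e) ?_ ?_ ?_
        · simp [hex]
        · intro i hi
          have := Finsupp.support_add hi
          rcases Finset.mem_union.mp this with h1 | h1
          · have : i = x := Finset.mem_singleton.mp (Finsupp.support_single_subset h1)
            exact this ▸ List.mem_cons_self (a := x) (l := xs)
          · have hixs : i ∈ xs := by
              have hiv : i ∈ q.vars := (mem_vars i).mpr ⟨e, he, h1⟩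
              exact List.mem_toFinset.mp (hqvars hiv)
            exact List.mem_cons_of_mem x hixs
        · rw [degree_add, degree_single, hdege]
          omega


lemma T_length (n : ℕ) : ∀ L : List (Fin n), L.length ≤ n →
    2 * T n L + L.length * L.length + L.length = 2 + 2 * n * L.length := by
  intro L
  induction L with
  | nil => intro _; simp [T]
  | cons x xs ih =>
    intro hlen
    rw [List.length_cons] at hlen ⊢
    have hxs : xs.length ≤ n := by omega
    have e1 := ih hxs
    obtain ⟨m, hm⟩ : ∃ m, n = xs.length + 1 + m := ⟨n - (xs.length + 1), by omega⟩
    have hsub : n - (xs.length + 1) = m := by omega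
    have hT : T n (x :: xs) = T n xs + m := by
      show T n xs + (n - (xs.length + 1)) = T n xs + m
      rw [hsub]
    rw [hT]
    have hmz : (n : ℤ) = (xs.length : ℤ) + 1 + m := by exact_mod_cast hm
    zify at e1 ⊢
    linear_combination e1 - 2 * hmz

lemma I_le_S (n : ℕ) :
    I n (List.finRange n)
      ≤ Ideal.span {q : MvPolynomial (Fin n) ℤ | q.IsSymmetric ∧ constantCoeff q = 0} := by
  rw [I, Ideal.span_le]
  rintro q ⟨k, hk, rfl⟩
  obtain ⟨m, rfl⟩ : ∃ m, k = m + 1 := ⟨k - 1, by omega⟩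
  apply Ideal.subset_span
  constructor
  · intro σ
    have hmap : ((List.finRange n).map σ).Perm (List.finRange n) := by
      apply List.perm_of_nodup_nodup_toFinset_eq
      · exact (List.nodup_finRange n).map σ.injective
      · exact List.nodup_finRange n
      · ext i
        simp only [List.mem_toFinset, List.mem_map, List.mem_finRange, true_and, iff_true]
        exact ⟨σ⁻¹ i, by simp⟩
    rw [H_rename n σ (m + 1) (List.finRange n), H_perm n hmap]
  · exact H_cc n m (List.finRange n)

end CoinvAux

/-- Every homogeneous polynomial in ℤ[x₁,…,xₙ] of degree > n(n−1)/2 lies in the ideal S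
generated by symmetric polynomials with zero constant term. -/
theorem homogeneous_high_degree_mem (n k : ℕ) (hk : n * (n - 1) / 2 < k)
    (p : MvPolynomial (Fin n) ℤ) (hp : p.IsHomogeneous k) :
    p ∈ Ideal.span {q : MvPolynomial (Fin n) ℤ | q.IsSymmetric ∧ constantCoeff q = 0} := by
  have hT : CoinvAux.T n (List.finRange n) ≤ k := by
    have h1 := CoinvAux.T_length n (List.finRange n) (by simp)
    rw [List.length_finRange] at h1
    have h2 : n * n = n * (n - 1) + n := by
      cases n with
      | zero => simp
      | succ m => rw [Nat.succ_sub_one]; ring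
    have h3 : n * (n - 1) / 2 * 2 = n * (n - 1) := by
      apply Nat.div_mul_cancel
      rcases n with _ | m
      · simp
      · rw [Nat.succ_sub_one, mul_comm]
        exact (Nat.even_mul_succ_self m).two_dvd
    linarith
  rw [← support_sum_monomial_coeff p]
  apply Ideal.sum_mem
  intro d hd
  apply CoinvAux.I_le_S n
  refine CoinvAux.key n (List.finRange n) (List.nodup_finRange n) d (coeff d p)
    (fun i _ => List.mem_finRange i) ?_
  have hdeg : d.degree = k := by
    simpa [Finsupp.degree_eq_weight_one, Pi.one_def] using hp (mem_support_iff.mp hd)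
  omega
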